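/- Let B be a binomial random variable with parameters (dv, v/n), where d, v, n are positive integers satisfying v/n ≤ ε/(2d) and v/n ≤ 1/2 for some ε > 0. Then P(B ≥ (1+ε)v) ≤ exp(−log((ε/(2d))·(n/v))·(1 + ε/2)·v). -/

import Mathlib

open MeasureTheory Real
open scoped ENNReal

lemma binom_mgf (p : NNReal) (h : p ≤ 1) (m : ℕ) (a : ℝ≥0∞) :
    ∑ k : Fin (m+1), PMF.binomial p h m k * a ^ (k:ℕ) = ((p:ℝ≥0∞)*a + (1-(p:ℝ≥0∞)))^m := by
  rw [add_pow, Finset.sum_fin_eq_sum_range]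
  apply Finset.sum_congr rfl
  intro k hk
  rw [Finset.mem_range] at hk
  rw [dif_pos hk, PMF.binomial_apply]
  simp only [Fin.val_mk, Fin.val_last, mul_pow]
  push_cast
  ring

set_option maxHeartbeats 1000000 in
/-- Tail bound for `B ~ Binomial(dv, v/n)` when `v/n ≤ ε/(2d)` and `v/n ≤ 1/2`:
`P(B ≥ (1+ε)v) ≤ exp (−log((ε/(2d))(n/v)) (1 + ε/2) v)`. -/
theorem binomial_tail_bound_eps {d v n : ℕ} (hd : 0 < d) (hv : 0 < v) (hn : 0 < n)
    (ε : ℝ) (hε : 0 < ε)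
    (h1 : (v : ℝ) / n ≤ ε / (2 * d)) (h2 : (v : ℝ) / n ≤ 1 / 2)
    (h : ENNReal.ofReal ((v : ℝ) / n) ≤ 1) :
    (PMF.binomial (Real.toNNReal ((v : ℝ) / n)) (ENNReal.coe_le_one_iff.mp h) (d * v)).toMeasure
        {k : Fin (d * v + 1) | (1 + ε) * v ≤ (k : ℝ)} ≤
      ENNReal.ofReal (exp (-(Real.log (ε / (2 * d) * (n / v)) * (1 + ε / 2) * v))) := by
  have hd' : (0:ℝ) < d := by exact_mod_cast hd
  have hv' : (0:ℝ) < v := by exact_mod_cast hv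
  have hn' : (0:ℝ) < n := by exact_mod_cast hn
  have h2d : (0:ℝ) < 2 * d := by linarith
  set p : ℝ := (v : ℝ) / n with hpdef
  have hp0 : 0 < p := div_pos hv' hn'
  have hp1 : p ≤ 1 := h2.trans (by norm_num)
  set L : ℝ := Real.log (ε / (2 * d) * (n / v)) with hLdef
  set u : ℝ := 2 * d * p / ε with hudef
  have hu0 : 0 < u := by positivity
  have hu1 : u ≤ 1 := by
    rw [hudef, div_le_one hε]
    have := (le_div_iff₀ h2d).1 h1
    nlinarith
  have harg : ε / (2 * d) * (n / v) = u⁻¹ := by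
    rw [hudef, hpdef]; field_simp
  have hLu : L = -Real.log u := by rw [hLdef, harg, Real.log_inv]
  have hLnn : 0 ≤ L := by
    rw [hLu, neg_nonneg]
    exact Real.log_nonpos hu0.le hu1
  have hεd : (0:ℝ) ≤ ε / (2 * d) := (div_pos hε h2d).le
  set m := d * v with hm
  set a : ℝ≥0∞ := ENNReal.ofReal (Real.exp L) with hadef
  set b : ℝ≥0∞ := ENNReal.ofReal (Real.exp (-(L * (1 + ε) * v))) with hbdef
  set P := PMF.binomial (Real.toNNReal p) (ENNReal.coe_le_one_iff.mp h) m with hP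
  set S : Set (Fin (m+1)) := {k : Fin (m + 1) | (1 + ε) * v ≤ (k : ℝ)} with hS
  rw [PMF.toMeasure_apply _ (MeasurableSet.of_discrete), tsum_fintype]
  have step1 : ∀ k : Fin (m+1), S.indicator P k ≤ P k * a ^ (k:ℕ) * b := by
    intro k
    by_cases hk : k ∈ S
    · rw [Set.indicator_of_mem hk]
      have hk' : (1 + ε) * v ≤ (k : ℝ) := hk
      have h1le : (1:ℝ≥0∞) ≤ a ^ (k:ℕ) * b := by
        rw [hadef, hbdef, ← ENNReal.ofReal_pow (Real.exp_pos _).le,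
          ← Real.exp_nat_mul, ← ENNReal.ofReal_mul (Real.exp_pos _).le,
          ← Real.exp_add]
        refine ENNReal.one_le_ofReal.2 (Real.one_le_exp ?_)
        nlinarith [mul_le_mul_of_nonneg_left hk' hLnn]
      calc P k = P k * 1 := (mul_one _).symm
        _ ≤ P k * (a ^ (k:ℕ) * b) := mul_le_mul_right h1le _
        _ = P k * a ^ (k:ℕ) * b := (mul_assoc _ _ _).symm
    · rw [Set.indicator_of_notMem hk]; exact zero_le
  calc ∑ k : Fin (m+1), S.indicator P k
      ≤ ∑ k : Fin (m+1), P k * a ^ (k:ℕ) * b := Finset.sum_le_sum fun k _ => step1 k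
    _ = (∑ k : Fin (m+1), P k * a ^ (k:ℕ)) * b := by rw [Finset.sum_mul]
    _ = (ENNReal.ofReal p * a + (1 - ENNReal.ofReal p)) ^ m * b := by
        rw [hP, binom_mgf]; rfl
    _ ≤ ENNReal.ofReal (exp (-(L * (1 + ε / 2) * v))) := by
        have hexpL : Real.exp L = ε / (2 * d) * (n / v) := by
          rw [hLdef, Real.exp_log]
          rw [harg]; positivity
        have hpa : ENNReal.ofReal p * a = ENNReal.ofReal (ε / (2 * d)) := by
          rw [hadef, ← ENNReal.ofReal_mul hp0.le, hexpL]
          congr 1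
          rw [hpdef]; field_simp
        have hq : (1 : ℝ≥0∞) - ENNReal.ofReal p = ENNReal.ofReal (1 - p) := by
          rw [ENNReal.ofReal_sub _ hp0.le, ENNReal.ofReal_one]
        rw [hpa, hq, ← ENNReal.ofReal_add hεd (by linarith),
          ← ENNReal.ofReal_pow (by linarith), ← ENNReal.ofReal_mul (pow_nonneg (by linarith) m)]
        apply ENNReal.ofReal_le_ofReal
        have hbase : ε / (2 * d) + (1 - p) ≤ Real.exp (ε / (2 * d) - p) := by
          have := Real.add_one_le_exp (ε / (2 * d) - p)
          linarith
        have hpow : (ε / (2 * d) + (1 - p)) ^ m ≤ Real.exp ((ε / (2 * d) - p) * m) := by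
          calc (ε / (2 * d) + (1 - p)) ^ m ≤ Real.exp (ε / (2 * d) - p) ^ m :=
                pow_le_pow_left₀ (by linarith) hbase m
            _ = Real.exp ((ε / (2 * d) - p) * m) := by
                rw [← Real.exp_nat_mul]; congr 1; ring
        have hfinal : (ε / (2 * d) - p) * m - L * (1 + ε) * v ≤ -(L * (1 + ε / 2) * v) := by
          have hlog : Real.log u ≤ u - 1 := Real.log_le_sub_one_of_pos hu0
          have hdp : ε / 2 * u = d * p := by rw [hudef]; field_simp
          have hmv : (m : ℝ) = d * v := by rw [hm]; push_cast; ring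
          have key : ε / 2 - d * p ≤ L * (ε / 2) := by
            rw [hLu]
            nlinarith
          rw [hmv]
          have hd2 : ε / (2 * d) * d = ε / 2 := by field_simp
          nlinarith [mul_le_mul_of_nonneg_right key hv'.le]
        calc (ε / (2 * d) + (1 - p)) ^ m * Real.exp (-(L * (1 + ε) * v))
            ≤ Real.exp ((ε / (2 * d) - p) * m) * Real.exp (-(L * (1 + ε) * v)) := by
              apply mul_le_mul_of_nonneg_right hpow (Real.exp_pos _).le
          _ = Real.exp ((ε / (2 * d) - p) * m - L * (1 + ε) * v) := by
              rw [← Real.exp_add]; congr 1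
          _ ≤ Real.exp (-(L * (1 + ε / 2) * v)) := Real.exp_le_exp.2 hfinal
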